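/- arXiv:2511.20125 — 4 statements merged into one kernel-verified Lean document; each statement's English description precedes it below -/
import Mathlib

section
/- Let G and G' be edge-neighboring graphs on V with G ⊆ G' (G' is G with one additional edge), and let τ ∈ ℕ. Then the edge distance between the clipped graphs satisfies d_edge(Clip(G, τ), Clip(G', τ)) ≤ 3. -/
open scoped symmDiff

variable {V : Type*}

noncomputable section

/-- Degree of a vertex `v` in `G`. -/
def deg [Fintype V] (G : SimpleGraph V) (v : V) : ℕ :=
  (G.neighborSet v).ncard

/-- Maximum degree of `G`. -/
def maxDeg [Fintype V] (G : SimpleGraph V) : ℕ :=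
  Finset.univ.sup (deg G)

/-- Number of vertices of `G` with degree at least `τ`. -/
def Ntau [Fintype V] (G : SimpleGraph V) (τ : ℕ) : ℕ :=
  {v : V | τ ≤ deg G v}.ncard

/-- Edge distance: the number of edges in the symmetric difference of the edge sets. -/
def edgeDist (G G' : SimpleGraph V) : ℕ :=
  (G.edgeSet ∆ G'.edgeSet).ncard

/-- Lexicographic key of an edge: the unordered pair written with its smaller endpoint first,
compared lexicographically. -/
def edgeKey [LinearOrder V] (e : Sym2 V) : Lex (V × V) :=
  Sym2.lift ⟨fun a b => toLex (min a b, max a b), fun a b => by simp only []; rw [min_comm, max_comm]⟩ e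

/-- `e` is among the `τ` smallest edges (in the fixed lexicographic order) incident to `v`
in `G`. -/
def clipKeep [Fintype V] [LinearOrder V] (G : SimpleGraph V) (τ : ℕ) (v : V)
    (e : Sym2 V) : Prop :=
  {e' ∈ G.incidenceSet v | edgeKey e' ≤ edgeKey e}.ncard ≤ τ

/-- The clipped graph `Clip G τ`: an edge of `G` is retained iff, for each of its two
endpoints `v`, it is among the `τ` smallest edges incident to `v` in `G`. -/
def Clip [Fintype V] [LinearOrder V] (G : SimpleGraph V) (τ : ℕ) : SimpleGraph V where
  Adj a b := G.Adj a b ∧ clipKeep G τ a s(a, b) ∧ clipKeep G τ b s(a, b)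
  symm := by
    constructor
    intro a b h
    refine ⟨h.1.symm, ?_, ?_⟩
    · rw [Sym2.eq_swap]; exact h.2.2
    · rw [Sym2.eq_swap]; exact h.2.1
  loopless := ⟨fun a h => G.irrefl h.1⟩

/-- Naive clipping: delete every edge having at least one endpoint of degree `> τ` in `G`. -/
def NaiveClip [Fintype V] (G : SimpleGraph V) (τ : ℕ) : SimpleGraph V where
  Adj a b := G.Adj a b ∧ deg G a ≤ τ ∧ deg G b ≤ τ
  symm := ⟨fun _ _ h => ⟨h.1.symm, h.2.2, h.2.1⟩⟩
  loopless := ⟨fun a h => G.irrefl h.1⟩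

/-- The graph obtained from `G` by deleting all vertices in `S` together with their
incident edges. -/
def deleteVerts (G : SimpleGraph V) (S : Set V) : SimpleGraph V where
  Adj a b := G.Adj a b ∧ a ∉ S ∧ b ∉ S
  symm := ⟨fun _ _ h => ⟨h.1.symm, h.2.2, h.2.1⟩⟩
  loopless := ⟨fun a h => G.irrefl h.1⟩

/-- `DelN G τ`: the minimum cardinality of a vertex set whose deletion bounds the maximum
degree of `G` by `τ`. (The paper's `Q_Del-N(G, τ)` equals `-DelN G τ`.) -/
def DelN [Fintype V] (G : SimpleGraph V) (τ : ℕ) : ℕ :=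
  sInf {n | ∃ S : Set V, S.ncard = n ∧ maxDeg (deleteVerts G S) ≤ τ}

/-- Total excess of vertex degrees over `τ`. (The paper's `Q_Del-Deg(G, τ)` equals
`-fExcess G τ / 2`.) -/
def fExcess [Fintype V] (G : SimpleGraph V) (τ : ℕ) : ℕ :=
  ∑ v, (deg G v - τ)

/-- A `τ`-feasible pair `(x, y)` for the LP relaxation of node deletion. -/
structure IsFeasible [Fintype V] (G : SimpleGraph V) (τ : ℕ) (x : V → ℝ)
    (y : Sym2 V → ℝ) : Prop where
  x_mem : ∀ v, x v ∈ Set.Icc (0 : ℝ) 1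
  y_mem : ∀ e ∈ G.edgeSet, y e ∈ Set.Icc (0 : ℝ) 1
  edge_cons : ∀ a b, G.Adj a b → 1 - x a - x b ≤ y s(a, b)
  deg_cons : ∀ v, ∑ᶠ e ∈ G.incidenceSet v, y e ≤ (τ : ℝ)

/-- The LP value: infimum of `Σ_v x_v` over all `τ`-feasible pairs.
(The paper's `Q_LP-Del-N(G, τ)` equals `-LPDelN G τ`.) -/
def LPDelN [Fintype V] (G : SimpleGraph V) (τ : ℕ) : ℝ :=
  sInf {t : ℝ | ∃ x y, IsFeasible G τ x y ∧ t = ∑ v, x v}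

section ClipAux

variable [Fintype V] [LinearOrder V]

/-- The set counted in `clipKeep`. -/
def keyBelow (G : SimpleGraph V) (v : V) (e : Sym2 V) : Set (Sym2 V) :=
  {e' ∈ G.incidenceSet v | edgeKey e' ≤ edgeKey e}

lemma clipKeep_iff (G : SimpleGraph V) (τ : ℕ) (v : V) (e : Sym2 V) :
    clipKeep G τ v e ↔ (keyBelow G v e).ncard ≤ τ := Iff.rfl

lemma mem_keyBelow {G : SimpleGraph V} {v : V} {e e' : Sym2 V} :
    e' ∈ keyBelow G v e ↔ (e' ∈ G.edgeSet ∧ v ∈ e') ∧ edgeKey e' ≤ edgeKey e := Iff.rfl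

lemma edgeKey_inj {e e' : Sym2 V} (h : edgeKey e = edgeKey e') : e = e' := by
  induction e using Sym2.ind with | _ a b =>
  induction e' using Sym2.ind with | _ c d =>
  have h' : (toLex (min a b, max a b) : Lex (V × V)) = toLex (min c d, max c d) := h
  have h2 : (min a b, max a b) = (min c d, max c d) := toLex.injective h'
  have hmin : min a b = min c d := congrArg Prod.fst h2
  have hmax : max a b = max c d := congrArg Prod.snd h2
  have key : ∀ x y : V, s(min x y, max x y) = s(x, y) := by
    intro x y
    rcases le_total x y with h | h
    · simp [min_eq_left h, max_eq_right h]
    · rw [min_eq_right h, max_eq_left h, Sym2.eq_swap]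
  calc s(a, b) = s(min a b, max a b) := (key a b).symm
    _ = s(min c d, max c d) := by rw [hmin, hmax]
    _ = s(c, d) := key c d

lemma clip_mem {G : SimpleGraph V} {τ : ℕ} {e : Sym2 V} {v : V}
    (he : e ∈ (Clip G τ).edgeSet) (hv : v ∈ e) :
    e ∈ G.edgeSet ∧ clipKeep G τ v e := by
  induction e using Sym2.ind with | _ x y =>
  rw [SimpleGraph.mem_edgeSet] at he
  obtain ⟨hG, kx, ky⟩ := he
  rcases Sym2.mem_iff.mp hv with rfl | rfl
  · exact ⟨hG, kx⟩
  · exact ⟨hG, ky⟩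

end ClipAux

/-- For edge-neighboring graphs `G ⊆ G'` (one extra edge `e₀`), the edge
distance between the clipped graphs is at most `3`. -/
theorem clip_edgeDist_le_three_of_edgeNeighboring [Fintype V] [LinearOrder V]
    (G G' : SimpleGraph V) (e₀ : Sym2 V) (τ : ℕ)
    (he₀ : e₀ ∉ G.edgeSet)
    (hG' : G'.edgeSet = insert e₀ G.edgeSet) :
    edgeDist (Clip G τ) (Clip G' τ) ≤ 3 := by
  classical
  have hfin : ∀ s : Set (Sym2 V), s.Finite := fun s => Set.toFinite s
  have hsubGG' : G.edgeSet ⊆ G'.edgeSet := by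
    rw [hG']; exact Set.subset_insert _ _
  -- keyBelow relations between G and G'
  have hKB₁ : ∀ v e, keyBelow G v e ⊆ keyBelow G' v e := by
    intro v e e' h
    exact ⟨⟨hsubGG' h.1.1, h.1.2⟩, h.2⟩
  have hKB₂ : ∀ v e, keyBelow G' v e ⊆ insert e₀ (keyBelow G v e) := by
    intro v e e' h
    obtain ⟨⟨he', hv⟩, hk⟩ := h
    rw [hG'] at he'
    rcases he' with rfl | he'
    · exact Set.mem_insert _ _
    · exact Set.mem_insert_of_mem _ ⟨⟨he', hv⟩, hk⟩
  -- if v ∉ e₀, clipKeep is unchanged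
  have hKB₃ : ∀ v e, v ∉ e₀ → keyBelow G' v e ⊆ keyBelow G v e := by
    intro v e hv e' h
    obtain ⟨⟨he', hve'⟩, hk⟩ := h
    rw [hG'] at he'
    rcases he' with rfl | he'
    · exact absurd hve' hv
    · exact ⟨⟨he', hve'⟩, hk⟩
  have keep_mono : ∀ v e, clipKeep G' τ v e → clipKeep G τ v e := by
    intro v e h
    exact le_trans (Set.ncard_le_ncard (hKB₁ v e) (hfin _)) h
  have keep_same : ∀ v e, v ∉ e₀ → clipKeep G τ v e → clipKeep G' τ v e := by
    intro v e hv h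
    exact le_trans (Set.ncard_le_ncard (hKB₃ v e hv) (hfin _)) h
  -- dropped edges at a vertex are unique
  have drop_count : ∀ v e, ¬ clipKeep G' τ v e → τ ≤ (keyBelow G v e).ncard := by
    intro v e nk
    have h1 : τ < (keyBelow G' v e).ncard := lt_of_not_ge nk
    have h2 : (keyBelow G' v e).ncard ≤ (keyBelow G v e).ncard + 1 :=
      le_trans (Set.ncard_le_ncard (hKB₂ v e) (hfin _)) (Set.ncard_insert_le _ _)
    omega
  have no_lt : ∀ v f₁ f₂, v ∈ f₂ → f₂ ∈ G.edgeSet → ¬ clipKeep G' τ v f₁ →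
      clipKeep G τ v f₂ → ¬ (edgeKey f₁ < edgeKey f₂) := by
    intro v f₁ f₂ hv2 h2 nk1 k2 hlt
    have hτ : τ ≤ (keyBelow G v f₁).ncard := drop_count v f₁ nk1
    have hnm : f₂ ∉ keyBelow G v f₁ := by
      intro hm
      exact absurd hlt (not_lt.mpr hm.2)
    have hsub : insert f₂ (keyBelow G v f₁) ⊆ keyBelow G v f₂ := by
      intro e' h
      rcases h with rfl | h
      · exact ⟨⟨h2, hv2⟩, le_refl _⟩
      · exact ⟨h.1, le_trans h.2 (le_of_lt hlt)⟩
    have h3 : (keyBelow G v f₁).ncard + 1 ≤ (keyBelow G v f₂).ncard := by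
      rw [← Set.ncard_insert_of_notMem hnm (hfin _)]
      exact Set.ncard_le_ncard hsub (hfin _)
    have : (keyBelow G v f₂).ncard ≤ τ := k2
    omega
  have drop_uniq : ∀ v e₁ e₂,
      e₁ ∈ G.edgeSet → v ∈ e₁ → clipKeep G τ v e₁ → ¬ clipKeep G' τ v e₁ →
      e₂ ∈ G.edgeSet → v ∈ e₂ → clipKeep G τ v e₂ → ¬ clipKeep G' τ v e₂ → e₁ = e₂ := by
    intro v e₁ e₂ h1 hv1 k1 nk1 h2 hv2 k2 nk2
    rcases lt_trichotomy (edgeKey e₁) (edgeKey e₂) with h | h | h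
    · exact absurd h (no_lt v e₁ e₂ hv2 h2 nk1 k2)
    · exact edgeKey_inj h
    · exact absurd h (no_lt v e₂ e₁ hv1 h1 nk2 k1)
  -- e₀ = s(a,b)
  induction e₀ using Sym2.ind with | _ a b =>
  -- dropped-edge sets at a and b
  set Da : Set (Sym2 V) :=
    {e | e ∈ (Clip G τ).edgeSet ∧ a ∈ e ∧ ¬ clipKeep G' τ a e} with hDa
  set Db : Set (Sym2 V) :=
    {e | e ∈ (Clip G τ).edgeSet ∧ b ∈ e ∧ ¬ clipKeep G' τ b e} with hDb
  have hDa1 : Da.ncard ≤ 1 := by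
    rw [Set.ncard_le_one (hfin _)]
    intro e₁ h₁ e₂ h₂
    obtain ⟨hc1, hv1, nk1⟩ := h₁
    obtain ⟨hc2, hv2, nk2⟩ := h₂
    obtain ⟨hg1, k1⟩ := clip_mem hc1 hv1
    obtain ⟨hg2, k2⟩ := clip_mem hc2 hv2
    exact drop_uniq a e₁ e₂ hg1 hv1 k1 nk1 hg2 hv2 k2 nk2
  have hDb1 : Db.ncard ≤ 1 := by
    rw [Set.ncard_le_one (hfin _)]
    intro e₁ h₁ e₂ h₂
    obtain ⟨hc1, hv1, nk1⟩ := h₁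
    obtain ⟨hc2, hv2, nk2⟩ := h₂
    obtain ⟨hg1, k1⟩ := clip_mem hc1 hv1
    obtain ⟨hg2, k2⟩ := clip_mem hc2 hv2
    exact drop_uniq b e₁ e₂ hg1 hv1 k1 nk1 hg2 hv2 k2 nk2
  -- the symmetric difference is contained in {e₀} ∪ Da ∪ Db
  have hsd : (Clip G τ).edgeSet ∆ (Clip G' τ).edgeSet ⊆ insert s(a, b) (Da ∪ Db) := by
    rw [Set.symmDiff_def]
    intro e he
    rcases he with ⟨heX, heY⟩ | ⟨heY, heX⟩
    · -- e ∈ Clip G \ Clip G' : dropped edge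
      induction e using Sym2.ind with | _ x y =>
      rw [SimpleGraph.mem_edgeSet] at heX
      obtain ⟨hGxy, kx, ky⟩ := heX
      have hG'xy : G'.Adj x y := by
        rw [← SimpleGraph.mem_edgeSet] at hGxy ⊢
        exact hsubGG' hGxy
      have hnk : ¬ clipKeep G' τ x s(x, y) ∨ ¬ clipKeep G' τ y s(x, y) := by
        by_contra hcon
        push_neg at hcon
        exact heY ((SimpleGraph.mem_edgeSet _).mpr ⟨hG'xy, hcon.1, hcon.2⟩)
      have hclip : s(x, y) ∈ (Clip G τ).edgeSet :=
        (SimpleGraph.mem_edgeSet _).mpr ⟨hGxy, kx, ky⟩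
      rcases hnk with hnk | hnk
      · have hx : x ∈ s(a, b) := by
          by_contra hx
          exact hnk (keep_same x s(x, y) hx kx)
        refine Set.mem_insert_of_mem _ ?_
        rcases Sym2.mem_iff.mp hx with rfl | rfl
        · exact Or.inl ⟨hclip, Sym2.mem_mk_left _ _, hnk⟩
        · exact Or.inr ⟨hclip, Sym2.mem_mk_left _ _, hnk⟩
      · have hy : y ∈ s(a, b) := by
          by_contra hy
          exact hnk (keep_same y s(x, y) hy ky)
        refine Set.mem_insert_of_mem _ ?_
        rcases Sym2.mem_iff.mp hy with rfl | rfl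
        · exact Or.inl ⟨hclip, Sym2.mem_mk_right _ _, hnk⟩
        · exact Or.inr ⟨hclip, Sym2.mem_mk_right _ _, hnk⟩
    · -- e ∈ Clip G' \ Clip G : must be e₀
      by_cases he0 : e = s(a, b)
      · rw [he0]; exact Set.mem_insert _ _
      · exfalso
        apply heX
        induction e using Sym2.ind with | _ x y =>
        rw [SimpleGraph.mem_edgeSet] at heY ⊢
        obtain ⟨hG'xy, kx, ky⟩ := heY
        have hGxy : G.Adj x y := by
          rw [← SimpleGraph.mem_edgeSet] at hG'xy ⊢
          rw [hG'] at hG'xy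
          rcases hG'xy with h | h
          · exact absurd h he0
          · exact h
        exact ⟨hGxy, keep_mono x _ kx, keep_mono y _ ky⟩
  calc edgeDist (Clip G τ) (Clip G' τ)
      = ((Clip G τ).edgeSet ∆ (Clip G' τ).edgeSet).ncard := rfl
    _ ≤ (insert s(a, b) (Da ∪ Db)).ncard := Set.ncard_le_ncard hsd (hfin _)
    _ ≤ (Da ∪ Db).ncard + 1 := Set.ncard_insert_le _ _
    _ ≤ (Da.ncard + Db.ncard) + 1 := by
        exact Nat.add_le_add_right (Set.ncard_union_le _ _) 1
    _ ≤ 3 := by omega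

end
end

section
/- Let τ ≥ 1 be a natural number and let G and G' be edge-neighboring graphs on V with G ⊆ G' (G' is G with one additional edge). Then the edge distance between the naively clipped graphs satisfies d_edge(NaiveClip(G, τ), NaiveClip(G', τ)) ≤ 2τ. -/
open scoped symmDiff

variable {V : Type*}

noncomputable section

/-- For `τ ≥ 1` and edge-neighboring graphs `G ⊆ G'` (one extra edge
`e₀`), the edge distance between the naively clipped graphs is at most `2τ`. -/
theorem naiveClip_edgeDist_le_of_edgeNeighboring [Fintype V]
    (G G' : SimpleGraph V) (e₀ : Sym2 V) (τ : ℕ) (hτ : 1 ≤ τ)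
    (he₀ : e₀ ∉ G.edgeSet)
    (hG' : G'.edgeSet = insert e₀ G.edgeSet) :
    edgeDist (NaiveClip G τ) (NaiveClip G' τ) ≤ 2 * τ := by
  classical
  induction e₀ using Sym2.ind with
  | _ a b =>
  have hGab : ¬ G.Adj a b := he₀
  have hadj' : ∀ x y, G'.Adj x y ↔ (s(x, y) = s(a, b)) ∨ G.Adj x y := by
    intro x y
    rw [← SimpleGraph.mem_edgeSet, hG', Set.mem_insert_iff, SimpleGraph.mem_edgeSet]
  have hna : G'.neighborSet a = insert b (G.neighborSet a) := by
    ext x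
    simp only [SimpleGraph.mem_neighborSet, hadj', Set.mem_insert_iff, Sym2.eq_iff]
    constructor
    · rintro ((⟨-, rfl⟩ | ⟨rfl, rfl⟩) | h) <;> simp_all
    · rintro (rfl | h) <;> simp_all
  have hnb : G'.neighborSet b = insert a (G.neighborSet b) := by
    ext x
    simp only [SimpleGraph.mem_neighborSet, hadj', Set.mem_insert_iff, Sym2.eq_iff]
    constructor
    · rintro ((⟨rfl, rfl⟩ | ⟨-, rfl⟩) | h) <;> simp_all
    · rintro (rfl | h) <;> simp_all
  have hda' : deg G' a = deg G a + 1 := by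
    rw [deg, deg, hna]
    exact Set.ncard_insert_of_notMem (fun hb => hGab hb) (Set.toFinite _)
  have hdb' : deg G' b = deg G b + 1 := by
    rw [deg, deg, hnb]
    exact Set.ncard_insert_of_notMem (fun ha => hGab ha.symm) (Set.toFinite _)
  have hother : ∀ v, v ≠ a → v ≠ b → deg G' v = deg G v := by
    intro v hva hvb
    have : G'.neighborSet v = G.neighborSet v := by
      ext x
      simp only [SimpleGraph.mem_neighborSet, hadj', Sym2.eq_iff]
      constructor
      · rintro ((⟨rfl, rfl⟩ | ⟨rfl, rfl⟩) | h) <;> first | exact h | simp_all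
      · exact fun h => Or.inr h
    rw [deg, deg, this]
  have hmono : ∀ v, deg G v ≤ deg G' v := by
    intro v
    refine Set.ncard_le_ncard ?_ (Set.toFinite _)
    intro x hx
    exact (hadj' v x).mpr (Or.inr hx)
  have hflip : ∀ v, deg G v ≤ τ → τ < deg G' v →
      (v = a ∧ deg G a = τ) ∨ (v = b ∧ deg G b = τ) := by
    intro v h1 h2
    by_cases hva : v = a
    · subst hva; left; exact ⟨rfl, by omega⟩
    by_cases hvb : v = b
    · subst hvb; right; exact ⟨rfl, by omega⟩
    · rw [hother v hva hvb] at h2; omega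
  set S := (NaiveClip G τ).edgeSet ∆ (NaiveClip G' τ).edgeSet with hS
  have hsub : ∀ e ∈ S, (e = s(a, b) ∧ deg G a + 1 ≤ τ ∧ deg G b + 1 ≤ τ) ∨
      ((deg G a = τ ∧ e ∈ G.incidenceSet a) ∨ (deg G b = τ ∧ e ∈ G.incidenceSet b)) := by
    intro e he
    induction e using Sym2.ind with
    | _ x y =>
    rw [hS, Set.mem_symmDiff] at he
    simp only [SimpleGraph.mem_edgeSet] at he
    have hNC : ∀ (H : SimpleGraph V), (NaiveClip H τ).Adj x y ↔
        H.Adj x y ∧ deg H x ≤ τ ∧ deg H y ≤ τ := fun H => Iff.rfl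
    rw [hNC G, hNC G'] at he
    rcases he with ⟨⟨hxy, hx, hy⟩, h2⟩ | ⟨⟨hxy', hx', hy'⟩, h2⟩
    · -- in NaiveClip G, not in NaiveClip G'
      have hxy' : G'.Adj x y := (hadj' x y).mpr (Or.inr hxy)
      push_neg at h2
      have : τ < deg G' x ∨ τ < deg G' y := by
        by_contra hcon
        push_neg at hcon
        exact absurd (h2 hxy' hcon.1) (by omega)
      right
      have hmem : ∀ v, v ∈ s(x, y) → s(x, y) ∈ G.incidenceSet v :=
        fun v hv => ⟨hxy, hv⟩
      rcases this with h | h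
      · rcases hflip x hx h with ⟨rfl, hd⟩ | ⟨rfl, hd⟩
        · exact Or.inl ⟨hd, hmem x (Sym2.mem_mk_left x y)⟩
        · exact Or.inr ⟨hd, hmem x (Sym2.mem_mk_left x y)⟩
      · rcases hflip y hy h with ⟨rfl, hd⟩ | ⟨rfl, hd⟩
        · exact Or.inl ⟨hd, hmem y (Sym2.mem_mk_right x y)⟩
        · exact Or.inr ⟨hd, hmem y (Sym2.mem_mk_right x y)⟩
    · -- in NaiveClip G', not in NaiveClip G
      rcases (hadj' x y).mp hxy' with heq | hxy
      · left
        refine ⟨heq, ?_, ?_⟩ <;>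
        · rw [Sym2.eq_iff] at heq
          rcases heq with ⟨rfl, rfl⟩ | ⟨rfl, rfl⟩ <;> omega
      · exact absurd ⟨hxy, le_trans (hmono x) hx', le_trans (hmono y) hy'⟩ h2
  have hcard : ∀ v, (G.incidenceSet v).ncard = deg G v := by
    intro v
    rw [deg, ← Nat.card_coe_set_eq, ← Nat.card_coe_set_eq]
    exact Nat.card_congr (G.incidenceSetEquivNeighborSet v)
  rw [edgeDist]
  by_cases hda : deg G a = τ <;> by_cases hdb : deg G b = τ
  · -- both degrees equal τ
    have hsub2 : S ⊆ G.incidenceSet a ∪ G.incidenceSet b := by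
      intro e he
      rcases hsub e he with ⟨_, h1, _⟩ | ⟨_, h⟩ | ⟨_, h⟩
      · omega
      · exact Or.inl h
      · exact Or.inr h
    calc S.ncard ≤ (G.incidenceSet a ∪ G.incidenceSet b).ncard :=
          Set.ncard_le_ncard hsub2 (Set.toFinite _)
      _ ≤ (G.incidenceSet a).ncard + (G.incidenceSet b).ncard := Set.ncard_union_le _ _
      _ ≤ 2 * τ := by rw [hcard, hcard, hda, hdb]; omega
  · have hsub2 : S ⊆ G.incidenceSet a := by
      intro e he
      rcases hsub e he with ⟨_, h1, _⟩ | ⟨_, h⟩ | ⟨hd, _⟩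
      · omega
      · exact h
      · exact absurd hd hdb
    calc S.ncard ≤ (G.incidenceSet a).ncard := Set.ncard_le_ncard hsub2 (Set.toFinite _)
      _ ≤ 2 * τ := by rw [hcard, hda]; omega
  · have hsub2 : S ⊆ G.incidenceSet b := by
      intro e he
      rcases hsub e he with ⟨_, _, h1⟩ | ⟨hd, _⟩ | ⟨_, h⟩
      · omega
      · exact absurd hd hda
      · exact h
    calc S.ncard ≤ (G.incidenceSet b).ncard := Set.ncard_le_ncard hsub2 (Set.toFinite _)
      _ ≤ 2 * τ := by rw [hcard, hdb]; omega
  · have hsub2 : S ⊆ {s(a, b)} := by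
      intro e he
      rcases hsub e he with ⟨h, _, _⟩ | ⟨hd, _⟩ | ⟨hd, _⟩
      · exact h
      · exact absurd hd hda
      · exact absurd hd hdb
    calc S.ncard ≤ ({s(a, b)} : Set (Sym2 V)).ncard :=
          Set.ncard_le_ncard hsub2 (Set.toFinite _)
      _ = 1 := Set.ncard_singleton _
      _ ≤ 2 * τ := by omega

end
end

section
/- Let G and G' be edge-neighboring graphs on V with G ⊆ G' (G' is G with one additional edge), and let τ ∈ ℕ. Then f(G, τ) ≤ f(G', τ) ≤ f(G, τ) + 2. (Equivalently, the paper's query Q_Del-Deg = −f/2 has global sensitivity 1 under edge-level neighboring and is sensitivity-monotonic: Q_Del-Deg(G, τ) ≥ Q_Del-Deg(G', τ) when G ⊆ G'.) -/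
open scoped symmDiff

variable {V : Type*}

noncomputable section

/-- For edge-neighboring graphs `G ⊆ G'` (one extra edge `e₀`),
`f(G, τ) ≤ f(G', τ) ≤ f(G, τ) + 2`: the query `Q_Del-Deg = -f/2` has global sensitivity
`1` under edge-level neighboring and is sensitivity-monotonic. -/
theorem fExcess_sensitivity [Fintype V]
    (G G' : SimpleGraph V) (e₀ : Sym2 V) (τ : ℕ)
    (he₀ : e₀ ∉ G.edgeSet)
    (hG' : G'.edgeSet = insert e₀ G.edgeSet) :
    fExcess G τ ≤ fExcess G' τ ∧ fExcess G' τ ≤ fExcess G τ + 2 := by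
  classical
  induction e₀ using Sym2.ind with
  | _ a b =>
  have hadj' : G'.Adj a b := by
    rw [← SimpleGraph.mem_edgeSet, hG']; exact Set.mem_insert _ _
  have hab : a ≠ b := hadj'.ne
  have hAdj : ∀ x y : V, G'.Adj x y ↔ s(x, y) = s(a, b) ∨ G.Adj x y := by
    intro x y
    rw [← SimpleGraph.mem_edgeSet, ← SimpleGraph.mem_edgeSet, hG', Set.mem_insert_iff]
  have hsub : ∀ v, G.neighborSet v ⊆ G'.neighborSet v := by
    intro v w hw
    exact (hAdj v w).2 (Or.inr hw)
  have hmono : ∀ v, deg G v ≤ deg G' v := by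
    intro v
    exact Set.ncard_le_ncard (hsub v) (Set.toFinite _)
  constructor
  · exact Finset.sum_le_sum fun v _ => Nat.sub_le_sub_right (hmono v) τ
  · have key : ∀ v, deg G' v ≤ deg G v + (if v = a ∨ v = b then 1 else 0) := by
      intro v
      by_cases hva : v = a
      · rw [if_pos (Or.inl hva)]
        have : G'.neighborSet v ⊆ insert b (G.neighborSet v) := by
          intro w hw
          rcases (hAdj v w).1 hw with h | h
          · rcases Sym2.eq_iff.mp h with ⟨h1, rfl⟩ | ⟨h1, rfl⟩
            · exact Set.mem_insert _ _
            · exact absurd (hva.symm.trans h1) hab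
          · exact Set.mem_insert_iff.mpr (Or.inr h)
        calc deg G' v ≤ (insert b (G.neighborSet v)).ncard :=
              Set.ncard_le_ncard this (Set.toFinite _)
          _ ≤ deg G v + 1 := Set.ncard_insert_le _ _
      by_cases hvb : v = b
      · rw [if_pos (Or.inr hvb)]
        have : G'.neighborSet v ⊆ insert a (G.neighborSet v) := by
          intro w hw
          rcases (hAdj v w).1 hw with h | h
          · rcases Sym2.eq_iff.mp h with ⟨h1, rfl⟩ | ⟨h1, rfl⟩
            · exact absurd ((hvb.symm.trans h1).symm) hab
            · exact Set.mem_insert _ _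
          · exact Set.mem_insert_iff.mpr (Or.inr h)
        calc deg G' v ≤ (insert a (G.neighborSet v)).ncard :=
              Set.ncard_le_ncard this (Set.toFinite _)
          _ ≤ deg G v + 1 := Set.ncard_insert_le _ _
      · simp only [hva, hvb, or_self, if_false, add_zero]
        have heq : G'.neighborSet v = G.neighborSet v := by
          ext w
          constructor
          · intro hw
            rcases (hAdj v w).1 hw with h | h
            · rcases Sym2.eq_iff.mp h with ⟨rfl, rfl⟩ | ⟨rfl, rfl⟩
              · exact (hva rfl).elim
              · exact (hvb rfl).elim
            · exact h
          · exact fun hw => hsub v hw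
        rw [deg, heq]; rfl
    calc fExcess G' τ ≤ ∑ v, ((deg G v - τ) + (if v = a ∨ v = b then 1 else 0)) := by
          refine Finset.sum_le_sum fun v _ => ?_
          calc deg G' v - τ ≤ (deg G v + (if v = a ∨ v = b then 1 else 0)) - τ :=
                Nat.sub_le_sub_right (key v) τ
            _ ≤ (deg G v - τ) + (if v = a ∨ v = b then 1 else 0) := by omega
      _ = fExcess G τ + ∑ v, (if v = a ∨ v = b then 1 else 0) := by
            rw [Finset.sum_add_distrib]; rfl
      _ ≤ fExcess G τ + 2 := by
            refine Nat.add_le_add_left ?_ _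
            calc ∑ v, (if v = a ∨ v = b then (1 : ℕ) else 0)
                ≤ ∑ v, ((if v = a then 1 else 0) + (if v = b then 1 else 0)) :=
                  Finset.sum_le_sum (fun v _ => by split_ifs <;> first | omega | tauto)
              _ = 2 := by simp [Finset.sum_add_distrib, Finset.sum_ite_eq']

end
end

section
/- Let G and G' be node-neighboring graphs on V with G ⊆ G', differing at a vertex u, and let τ ∈ ℕ. Then DelN(G, τ) ≤ DelN(G', τ) ≤ DelN(G, τ) + 1. (Equivalently, the paper's query Q_Del-N = −DelN has global sensitivity 1 under node-level neighboring and is sensitivity-monotonic: Q_Del-N(G, τ) ≥ Q_Del-N(G', τ) when G ⊆ G'.) -/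
open scoped symmDiff

variable {V : Type*}

noncomputable section

lemma maxDeg_mono' [Fintype V] {H H' : SimpleGraph V} (h : H ≤ H') :
    maxDeg H ≤ maxDeg H' :=
  Finset.sup_mono_fun fun v _ =>
    Set.ncard_le_ncard (fun _ hw => h hw) (Set.toFinite _)

lemma delN_nonempty [Fintype V] (H : SimpleGraph V) (τ : ℕ) :
    {n | ∃ S : Set V, S.ncard = n ∧ maxDeg (deleteVerts H S) ≤ τ}.Nonempty := by
  refine ⟨(Set.univ : Set V).ncard, Set.univ, rfl, ?_⟩
  apply Finset.sup_le
  intro v _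
  have : deg (deleteVerts H Set.univ) v = 0 := by
    simp [deg, deleteVerts, SimpleGraph.neighborSet]
  omega

/-- For node-neighboring graphs `G ⊆ G'` differing at `u`,
`DelN(G, τ) ≤ DelN(G', τ) ≤ DelN(G, τ) + 1`: the query `Q_Del-N = -DelN` has global
sensitivity `1` under node-level neighboring and is sensitivity-monotonic. -/
theorem delN_sensitivity [Fintype V]
    (G G' : SimpleGraph V) (u : V) (τ : ℕ)
    (hsub : G ≤ G')
    (hdiff : ∀ e ∈ G'.edgeSet, e ∉ G.edgeSet → u ∈ e) :
    DelN G τ ≤ DelN G' τ ∧ DelN G' τ ≤ DelN G τ + 1 := by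
  constructor
  · obtain ⟨S, hcard, hmax⟩ := Nat.sInf_mem (delN_nonempty G' τ)
    refine Nat.sInf_le ⟨S, hcard, le_trans (maxDeg_mono' ?_) hmax⟩
    intro a b hab
    exact ⟨hsub hab.1, hab.2⟩
  · obtain ⟨S, hcard, hmax⟩ := Nat.sInf_mem (delN_nonempty G τ)
    have hle : deleteVerts G' (insert u S) ≤ deleteVerts G S := by
      intro a b hab
      obtain ⟨hadj, ha, hb⟩ := hab
      have hau : a ≠ u := fun h => ha (h ▸ Set.mem_insert u S)
      have hbu : b ≠ u := fun h => hb (h ▸ Set.mem_insert u S)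
      refine ⟨?_, fun h => ha (Set.mem_insert_of_mem _ h),
        fun h => hb (Set.mem_insert_of_mem _ h)⟩
      by_contra hnot
      have := hdiff s(a, b) ((G'.mem_edgeSet).mpr hadj)
        (fun h => hnot ((G.mem_edgeSet).mp h))
      rw [Sym2.mem_iff] at this
      rcases this with h | h
      · exact hau h.symm
      · exact hbu h.symm
    have h1 : DelN G' τ ≤ (insert u S).ncard :=
      Nat.sInf_le ⟨insert u S, rfl, le_trans (maxDeg_mono' hle) hmax⟩
    have h2 : (insert u S).ncard ≤ S.ncard + 1 := Set.ncard_insert_le u S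
    have h3 : S.ncard = DelN G τ := hcard
    omega

end
end
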